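/- arXiv:1210.0109 — 3 statements merged into one kernel-verified Lean document; each statement's English description precedes it below -/
import Mathlib

section
/- Let $\varphi : \mathcal{S}^1 \to \mathbb{R}$ be a function of bounded variation with $\varphi \ge 0$, $\int_0^1 \varphi\,dx = 1$, and total variation $\bigvee_0^1 \varphi \le a^*$. Let $\{J_i\}$ be a finite partition of $\mathcal{S}^1$ into intervals, each of length less than $1/(2a^*)$. Then there exists a partition element $J$ such that $\varphi(z) \ge 1/2$ for all $z \in J$. -/
open MeasureTheory

/-- A BV probability density on the circle (modeled as `[0,1]` with
endpoints identified) with total variation at most `a*` is at least `1/2` on some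
element of any interval partition with mesh `< 1/(2 a*)`. -/
theorem bv_density_large_on_partition_element
    (φ : ℝ → ℝ) (aStar : ℝ) (haStar : 0 < aStar)
    (hφnonneg : ∀ x ∈ Set.Icc (0 : ℝ) 1, 0 ≤ φ x)
    (hφint : IntegrableOn φ (Set.Icc (0 : ℝ) 1) volume)
    (hφ1 : ∫ x in Set.Icc (0 : ℝ) 1, φ x = 1)
    (hφvar : eVariationOn φ (Set.Icc (0 : ℝ) 1) ≤ ENNReal.ofReal aStar)
    (m : ℕ) (hm : 0 < m) (t : ℕ → ℝ)
    (ht0 : t 0 = 0) (htm : t m = 1)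
    (htmono : ∀ i < m, t i < t (i + 1))
    (htlen : ∀ i < m, t (i + 1) - t i < 1 / (2 * aStar)) :
    ∃ i < m, ∀ z ∈ Set.Icc (t i) (t (i + 1)), 1 / 2 ≤ φ z := by
  by_contra hcon
  push_neg at hcon
  -- choose witnesses z i with φ (z i) < 1/2
  choose z hz hzlt using hcon
  -- monotonicity of t
  have hmono : ∀ i j, i ≤ j → j ≤ m → t i ≤ t j := by
    intro i j hij hjm
    induction j with
    | zero => simp_all
    | succ n ih =>
      rcases Nat.lt_or_ge i (n+1) with h | h
      · have h1 : t i ≤ t n := ih (Nat.lt_succ_iff.mp h) (Nat.le_of_succ_le hjm)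
        exact h1.trans (htmono n (Nat.lt_of_succ_le hjm)).le
      · have : i = n + 1 := le_antisymm hij h
        simp [this]
  have hsub : ∀ i < m, Set.Icc (t i) (t (i+1)) ⊆ Set.Icc (0:ℝ) 1 := by
    intro i hi x hx
    constructor
    · calc (0:ℝ) = t 0 := ht0.symm
        _ ≤ t i := hmono 0 i (Nat.zero_le _) hi.le
        _ ≤ x := hx.1
    · calc x ≤ t (i+1) := hx.2
        _ ≤ t m := hmono (i+1) m hi le_rfl
        _ = 1 := htm
  -- variations on subintervals
  set E : ℕ → ENNReal := fun i => eVariationOn φ (Set.Icc (t i) (t (i+1))) with hE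
  have hEle : ∀ i < m, E i ≤ ENNReal.ofReal aStar := fun i hi =>
    (eVariationOn.mono φ (hsub i hi)).trans hφvar
  have hEfin : ∀ i < m, E i ≠ ⊤ := fun i hi =>
    ((hEle i hi).trans_lt ENNReal.ofReal_lt_top).ne
  -- sum of variations equals total variation on [0, t n]
  have hsumE : ∀ n ≤ m, ∑ i ∈ Finset.range n, E i
      = eVariationOn φ (Set.Icc (t 0) (t n)) := by
    intro n hn
    induction n with
    | zero => simp [eVariationOn.subsingleton φ (by simp : (Set.Icc (t 0) (t 0)).Subsingleton)]
    | succ k ih =>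
      rw [Finset.sum_range_succ, ih (Nat.le_of_succ_le hn)]
      have h1 : t 0 ≤ t k := hmono 0 k (Nat.zero_le _) (Nat.le_of_succ_le hn)
      have h2 : t k ≤ t (k+1) := (htmono k (Nat.lt_of_succ_le hn)).le
      have := eVariationOn.Icc_add_Icc (s := Set.univ) φ h1 h2 (Set.mem_univ _)
      simpa [Set.univ_inter] using this
  have hsumEtot : ∑ i ∈ Finset.range m, E i ≤ ENNReal.ofReal aStar := by
    rw [hsumE m le_rfl, ht0, htm]; exact hφvar
  set V : ℕ → ℝ := fun i => (E i).toReal with hV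
  have hVnonneg : ∀ i, 0 ≤ V i := fun i => ENNReal.toReal_nonneg
  have hVsum : ∑ i ∈ Finset.range m, V i ≤ aStar := by
    have : (∑ i ∈ Finset.range m, E i).toReal ≤ aStar := by
      refine ENNReal.toReal_le_of_le_ofReal haStar.le hsumEtot
    rwa [ENNReal.toReal_sum (fun i hi => hEfin i (Finset.mem_range.mp hi))] at this
  -- pointwise bound on each subinterval
  have hpt : ∀ i, ∀ hi : i < m, ∀ x ∈ Set.Icc (t i) (t (i+1)), φ x ≤ φ (z i hi) + V i := by
    intro i hi x hx
    have := eVariationOn.edist_le φ hx (hz i hi)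
    have h2 : ENNReal.ofReal (dist (φ x) (φ (z i hi))) ≤ E i := by
      simpa [edist_dist] using this
    have h3 : dist (φ x) (φ (z i hi)) ≤ V i := by
      rw [hV]
      exact (ENNReal.ofReal_le_iff_le_toReal (hEfin i hi)).mp h2
    have := (abs_le.mp (by simpa [Real.dist_eq] using h3)).2
    linarith
  -- integrability on subintervals
  have hinti : ∀ i < m, IntegrableOn φ (Set.Icc (t i) (t (i+1))) volume :=
    fun i hi => hφint.mono_set (hsub i hi)
  -- integral bound on each subinterval
  have hint_bound : ∀ i, ∀ hi : i < m,
      ∫ x in Set.Icc (t i) (t (i+1)), φ x ≤ (t (i+1) - t i) * (φ (z i hi) + V i) := by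
    intro i hi
    have hle : t i ≤ t (i+1) := (htmono i hi).le
    have := setIntegral_mono_on (hinti i hi)
      (integrableOn_const (by simp [Real.volume_Icc]))
      measurableSet_Icc (hpt i hi)
    calc ∫ x in Set.Icc (t i) (t (i+1)), φ x
        ≤ ∫ _x in Set.Icc (t i) (t (i+1)), (φ (z i hi) + V i) := this
      _ = (t (i+1) - t i) * (φ (z i hi) + V i) := by
          rw [setIntegral_const, Real.volume_real_Icc_of_le hle, smul_eq_mul]
  -- sum of integrals equals 1
  have hintervalInt : ∀ i < m, IntervalIntegrable φ volume (t i) (t (i+1)) := by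
    intro i hi
    have : Set.uIcc (t i) (t (i+1)) = Set.Icc (t i) (t (i+1)) := Set.uIcc_of_le (htmono i hi).le
    exact IntegrableOn.intervalIntegrable (this ▸ hinti i hi)
  have hsumint : ∑ i ∈ Finset.range m, ∫ x in Set.Icc (t i) (t (i+1)), φ x = 1 := by
    have h1 : ∀ i < m, ∫ x in Set.Icc (t i) (t (i+1)), φ x = ∫ x in (t i)..(t (i+1)), φ x := by
      intro i hi
      rw [intervalIntegral.integral_of_le (htmono i hi).le, integral_Icc_eq_integral_Ioc]
    rw [Finset.sum_congr rfl (fun i hi => h1 i (Finset.mem_range.mp hi))]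
    rw [intervalIntegral.sum_integral_adjacent_intervals hintervalInt]
    rw [ht0, htm, intervalIntegral.integral_of_le zero_le_one,
      ← integral_Icc_eq_integral_Ioc, hφ1]
  -- final contradiction
  have hterm : ∀ i ∈ Finset.range m,
      ∫ x in Set.Icc (t i) (t (i+1)), φ x < (t (i+1) - t i) / 2 + V i / (2 * aStar) := by
    intro i hi'
    have hi := Finset.mem_range.mp hi'
    have hlen := htlen i hi
    have hlpos : 0 < t (i+1) - t i := by linarith [htmono i hi]
    have h2a : 0 < 2 * aStar := by linarith
    calc ∫ x in Set.Icc (t i) (t (i+1)), φ x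
        ≤ (t (i+1) - t i) * (φ (z i hi) + V i) := hint_bound i hi
      _ < (t (i+1) - t i) * (1/2 + V i) := by
          apply mul_lt_mul_of_pos_left _ hlpos
          linarith [hzlt i hi]
      _ ≤ (t (i+1) - t i) / 2 + V i / (2 * aStar) := by
          have hVb : (t (i+1) - t i) * V i ≤ V i / (2 * aStar) := by
            rcases eq_or_lt_of_le (hVnonneg i) with h | h
            · rw [← h]; simp
            · rw [div_eq_mul_inv, mul_comm (V i)]
              exact mul_le_mul_of_nonneg_right (by rw [← one_div]; linarith) h.le
          have hring : (t (i+1) - t i) * (1/2 + V i)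
              = (t (i+1) - t i) / 2 + (t (i+1) - t i) * V i := by ring
          linarith
  have hlt : (1:ℝ) < 1 := by
    have hne : (Finset.range m).Nonempty := Finset.nonempty_range_iff.mpr hm.ne'
    calc (1:ℝ) = ∑ i ∈ Finset.range m, ∫ x in Set.Icc (t i) (t (i+1)), φ x := hsumint.symm
      _ < ∑ i ∈ Finset.range m, ((t (i+1) - t i) / 2 + V i / (2 * aStar)) :=
          Finset.sum_lt_sum_of_nonempty hne hterm
      _ = (∑ i ∈ Finset.range m, (t (i+1) - t i)) / 2
          + (∑ i ∈ Finset.range m, V i) / (2 * aStar) := by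
          rw [Finset.sum_add_distrib, ← Finset.sum_div, ← Finset.sum_div]
      _ = 1 / 2 + (∑ i ∈ Finset.range m, V i) / (2 * aStar) := by
          rw [Finset.sum_range_sub (fun i => t i), ht0, htm]; norm_num
      _ ≤ 1 / 2 + aStar / (2 * aStar) := by
          have h2a : 0 < 2 * aStar := by linarith
          gcongr
      _ = 1 := by field_simp; ring
  exact absurd hlt (lt_irrefl 1)
end

section
/- Let $f : \mathcal{S}^1 \to \mathcal{S}^1$ be piecewise $C^2$ expanding with respect to a finite interval partition $\mathcal{A}_1$, with $\inf |f'| > 2$ on each partition element. Let $J \subset \mathcal{S}^1$ be a nondegenerate interval. Then there exists $s \in \mathbb{Z}^+$ and a subinterval $J_s \subset J$ such that $f^s|J_s$ is $C^2$ (i.e. $J_s, f(J_s), \dots, f^{s-1}(J_s)$ each lie inside a single element of $\mathcal{A}_1$) and $f^s(J_s) \supset I$ for some $I \in \mathcal{A}_1$. -/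
open Set

namespace Overflow

lemma image_Ico_of_mono {ψ : ℝ → ℝ} {a b : ℝ} (hab : a ≤ b)
    (hm : StrictMonoOn ψ (Icc a b)) (hc : ContinuousOn ψ (Icc a b)) :
    ψ '' Ico a b = Ico (ψ a) (ψ b) := by
  apply Subset.antisymm
  · rintro _ ⟨x, hx, rfl⟩
    have hx' : x ∈ Icc a b := Ico_subset_Icc_self hx
    refine ⟨?_, hm hx' (right_mem_Icc.2 hab) hx.2⟩
    rcases eq_or_lt_of_le hx.1 with h | h
    · exact le_of_eq (by rw [h])
    · exact (hm (left_mem_Icc.2 hab) hx' h).le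
  · exact intermediate_value_Ico hab hc

lemma image_Ico_of_anti {ψ : ℝ → ℝ} {a b : ℝ} (hab : a ≤ b)
    (hm : StrictAntiOn ψ (Icc a b)) (hc : ContinuousOn ψ (Icc a b)) :
    ψ '' Ico a b = Ioc (ψ b) (ψ a) := by
  apply Subset.antisymm
  · rintro _ ⟨x, hx, rfl⟩
    have hx' : x ∈ Icc a b := Ico_subset_Icc_self hx
    refine ⟨hm hx' (right_mem_Icc.2 hab) hx.2, ?_⟩
    rcases eq_or_lt_of_le hx.1 with h | h
    · exact le_of_eq (by rw [h])
    · exact (hm (left_mem_Icc.2 hab) hx' h).le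
  · exact intermediate_value_Ico' hab hc

lemma exists_index {m : ℕ} {c : ℕ → ℝ} (hc0 : c 0 = 0) (hcm : c m = 1)
    {p : ℝ} (hp0 : 0 ≤ p) (hp1 : p < 1) :
    ∃ j < m, c j ≤ p ∧ p < c (j + 1) := by
  have key : ∀ n, n ≤ m → p < c n → ∃ j < n, c j ≤ p ∧ p < c (j + 1) := by
    intro n
    induction n with
    | zero => intro _ h; rw [hc0] at h; exact absurd h (not_lt.2 hp0)
    | succ k ih =>
      intro hk h
      by_cases hck : c k ≤ p
      · exact ⟨k, lt_add_one k, hck, h⟩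
      · obtain ⟨j, hj, h1, h2⟩ := ih (Nat.le_of_succ_le hk) (not_le.1 hck)
        exact ⟨j, Nat.lt_succ_of_lt hj, h1, h2⟩
  obtain ⟨j, hj, h1, h2⟩ := key m le_rfl (by rw [hcm]; exact hp1)
  exact ⟨j, hj, h1, h2⟩

lemma c_le {m : ℕ} {c : ℕ → ℝ} (hcmono : ∀ i < m, c i < c (i + 1)) :
    ∀ i j, i ≤ j → j ≤ m → c i ≤ c j := by
  have key : ∀ n i, i + n ≤ m → c i ≤ c (i + n) := by
    intro n
    induction n with
    | zero => intro i _; simp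
    | succ k ih =>
      intro i h
      have h1 : c i ≤ c (i + k) := ih i (by omega)
      have h2 : c (i + k) < c (i + k + 1) := hcmono (i + k) (by omega)
      calc c i ≤ c (i + k) := h1
        _ ≤ c (i + (k + 1)) := by rw [show i + (k+1) = i + k + 1 by ring]; exact h2.le
  intro i j hij hjm
  have := key (j - i) i (by omega)
  rwa [show i + (j - i) = j by omega] at this

lemma branch {lam : ℝ} (hlam : 0 < lam) {G : ℝ → ℝ} {A B : ℝ}
    (hAB : A < B)
    (hC2 : ContDiffOn ℝ 2 G (Icc A B))
    (hder : ∀ x ∈ Icc A B, lam ≤ |derivWithin G (Icc A B) x|) :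
    ContinuousOn G (Icc A B) ∧ (StrictMonoOn G (Icc A B) ∨ StrictAntiOn G (Icc A B)) ∧
      ∀ x ∈ Icc A B, ∀ y ∈ Icc A B, lam * |y - x| ≤ |G y - G x| := by
  have hcont : ContinuousOn G (Icc A B) := hC2.continuousOn
  have hdW : ContinuousOn (derivWithin G (Icc A B)) (Icc A B) :=
    hC2.continuousOn_derivWithin (uniqueDiffOn_Icc hAB) (by norm_num)
  have hdiffAt : ∀ x ∈ Ioo A B, HasDerivAt G (derivWithin G (Icc A B) x) x := by
    intro x hx
    have hnhds : Icc A B ∈ nhds x := Icc_mem_nhds hx.1 hx.2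
    have hdiff : DifferentiableWithinAt ℝ G (Icc A B) x :=
      (hC2.differentiableOn (by norm_num)) x (Ioo_subset_Icc_self hx)
    have hAt : DifferentiableAt ℝ G x := hdiff.differentiableAt hnhds
    rw [derivWithin_of_mem_nhds hnhds]
    exact hAt.hasDerivAt
  -- sign dichotomy
  have habs : ∀ x ∈ Icc A B, lam ≤ derivWithin G (Icc A B) x ∨
      derivWithin G (Icc A B) x ≤ -lam := by
    intro x hx
    rcases le_abs.1 (hder x hx) with h | h
    · exact Or.inl h
    · exact Or.inr (by linarith)
  have hsign : (∀ x ∈ Icc A B, lam ≤ derivWithin G (Icc A B) x) ∨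
      (∀ x ∈ Icc A B, derivWithin G (Icc A B) x ≤ -lam) := by
    by_cases hpos : ∀ x ∈ Icc A B, lam ≤ derivWithin G (Icc A B) x
    · exact Or.inl hpos
    · push_neg at hpos
      obtain ⟨x0, hx0, hx0'⟩ := hpos
      have hx0neg : derivWithin G (Icc A B) x0 ≤ -lam := by
        rcases habs x0 hx0 with h | h
        · exact absurd h (not_le.2 hx0')
        · exact h
      right
      intro y hy
      rcases habs y hy with h | h
      · exfalso
        have hsub : uIcc x0 y ⊆ Icc A B := (ordConnected_Icc).uIcc_subset hx0 hy
        have h0 : (0:ℝ) ∈ uIcc (derivWithin G (Icc A B) x0) (derivWithin G (Icc A B) y) := by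
          rw [mem_uIcc]
          left
          constructor <;> linarith
        obtain ⟨z, hz, hz0⟩ := intermediate_value_uIcc (hdW.mono hsub) h0
        have := hder z (hsub hz)
        rw [hz0] at this
        simp at this
        linarith
      · exact h
  have hslope : ∀ x ∈ Icc A B, ∀ y ∈ Icc A B, lam * |y - x| ≤ |G y - G x| := by
    have key : ∀ x ∈ Icc A B, ∀ y ∈ Icc A B, x < y → lam * (y - x) ≤ |G y - G x| := by
      intro x hx y hy hxy
      obtain ⟨z, hz, hzs⟩ := exists_hasDerivAt_eq_slope G (derivWithin G (Icc A B)) hxy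
        (hcont.mono (Icc_subset_Icc hx.1 hy.2))
        (fun w hw => hdiffAt w ⟨lt_of_le_of_lt hx.1 hw.1, lt_of_lt_of_le hw.2 hy.2⟩)
      have hzmem : z ∈ Icc A B := ⟨(lt_of_le_of_lt hx.1 hz.1).le, (lt_of_lt_of_le hz.2 hy.2).le⟩
      have h1 : lam ≤ |derivWithin G (Icc A B) z| := hder z hzmem
      rw [hzs, abs_div, abs_of_pos (by linarith : (0:ℝ) < y - x)] at h1
      rw [le_div_iff₀ (by linarith : (0:ℝ) < y - x)] at h1
      linarith
    intro x hx y hy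
    rcases lt_trichotomy x y with h | h | h
    · rw [abs_of_pos (by linarith : (0:ℝ) < y - x)]; exact key x hx y hy h
    · simp [h]
    · have hk := key y hy x hx h
      rw [abs_sub_comm y x, abs_sub_comm (G y) (G x),
        abs_of_pos (by linarith : (0:ℝ) < x - y)]
      exact hk
  refine ⟨hcont, ?_, hslope⟩
  rcases hsign with h | h
  · left
    apply strictMonoOn_of_deriv_pos (convex_Icc A B) hcont
    intro x hx
    rw [interior_Icc] at hx
    rw [← derivWithin_of_mem_nhds (Icc_mem_nhds hx.1 hx.2)]
    linarith [h x (Ioo_subset_Icc_self hx)]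
  · right
    apply strictAntiOn_of_deriv_neg (convex_Icc A B) hcont
    intro x hx
    rw [interior_Icc] at hx
    rw [← derivWithin_of_mem_nhds (Icc_mem_nhds hx.1 hx.2)]
    linarith [h x (Ioo_subset_Icc_self hx)]

def Inv (f : ℝ → ℝ) (m : ℕ) (c : ℕ → ℝ) (J : Set ℝ) (s : ℕ) (a b u v : ℝ) : Prop :=
  a < b ∧ u < v ∧ Ico a b ⊆ J ∧
  (∀ k < s, ∃ i < m, f^[k] '' Ico a b ⊆ Ico (c i) (c (i + 1))) ∧
  ∃ i < m, Icc u v ⊆ Icc (c i) (c (i + 1)) ∧ f^[s] '' Ico a b ⊆ Ico (c i) (c (i + 1)) ∧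
  ∃ ψ : ℝ → ℝ, (∀ x ∈ Ico a b, f^[s] x = ψ x) ∧ ContinuousOn ψ (Icc a b) ∧
    ((StrictMonoOn ψ (Icc a b) ∧ ψ a = u ∧ ψ b = v) ∨
     (StrictAntiOn ψ (Icc a b) ∧ ψ a = v ∧ ψ b = u))

def Concl (f : ℝ → ℝ) (m : ℕ) (c : ℕ → ℝ) (J : Set ℝ) : Prop :=
  ∃ s : ℕ, 0 < s ∧ ∃ Js : Set ℝ, Js ⊆ J ∧ (∃ a b : ℝ, a < b ∧ Js = Set.Ico a b) ∧
    (∀ k < s, ∃ i < m, f^[k] '' Js ⊆ Set.Ico (c i) (c (i + 1))) ∧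
    (∃ i < m, Set.Ico (c i) (c (i + 1)) ⊆ f^[s] '' Js)

lemma step (f : ℝ → ℝ) (m : ℕ) (hm : 0 < m) (c : ℕ → ℝ)
    (hc0 : c 0 = 0) (hcm : c m = 1) (hcmono : ∀ i < m, c i < c (i + 1))
    (lam : ℝ) (hlam : 2 < lam)
    (g : ℕ → ℝ → ℝ)
    (hpiece : ∀ i < m,
      ContDiffOn ℝ 2 (g i) (Set.Icc (c i) (c (i + 1))) ∧
      (∀ x ∈ Set.Ico (c i) (c (i + 1)), f x = Int.fract (g i x)) ∧
      (∀ x ∈ Set.Icc (c i) (c (i + 1)), lam ≤ |derivWithin (g i) (Set.Icc (c i) (c (i + 1))) x|))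
    (J : Set ℝ) {s : ℕ} {a b u v : ℝ} (h : Inv f m c J s a b u v) :
    Concl f m c J ∨ ∃ a' b' u' v', Inv f m c J (s + 1) a' b' u' v' ∧
      (lam + 2) / 4 * (v - u) ≤ v' - u' := by
  obtain ⟨hab, huv, hJs, hchain, i, him, hIcc, himg, ψ, hψeq, hψc, hψor⟩ := h
  obtain ⟨hC2, hfeq, hder⟩ := hpiece i him
  have hlam0 : (0:ℝ) < lam := by linarith
  have hci : c i < c (i + 1) := hcmono i him
  obtain ⟨hGc, hGor, hGslope⟩ := branch hlam0 hci hC2 hder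
  have hamem : a ∈ Icc a b := left_mem_Icc.2 hab.le
  have hbmem : b ∈ Icc a b := right_mem_Icc.2 hab.le
  have humem : u ∈ Icc u v := left_mem_Icc.2 huv.le
  have hvmem : v ∈ Icc u v := right_mem_Icc.2 huv.le
  have hψmaps : Set.MapsTo ψ (Icc a b) (Icc u v) := by
    rcases hψor with ⟨hmono, ha, hb⟩ | ⟨hanti, ha, hb⟩ <;> intro x hx
    · exact ⟨ha ▸ hmono.monotoneOn hamem hx hx.1, hb ▸ hmono.monotoneOn hx hbmem hx.2⟩
    · exact ⟨hb ▸ hanti.antitoneOn hx hbmem hx.2, ha ▸ hanti.antitoneOn hamem hx hx.1⟩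
  set φ : ℝ → ℝ := fun x => g i (ψ x) with hφ
  have hφc : ContinuousOn φ (Icc a b) :=
    hGc.comp hψc (fun x hx => hIcc (hψmaps hx))
  have hGor' : StrictMonoOn (g i) (Icc u v) ∨ StrictAntiOn (g i) (Icc u v) := by
    rcases hGor with h' | h'
    · exact Or.inl (h'.mono hIcc)
    · exact Or.inr (h'.mono hIcc)
  have hslope : lam * (v - u) ≤ |g i v - g i u| := by
    have := hGslope u (hIcc humem) v (hIcc hvmem)
    rwa [abs_of_pos (by linarith : (0:ℝ) < v - u)] at this
  obtain ⟨U, V, hUV, hlen, hφor⟩ :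
      ∃ U V : ℝ, U < V ∧ lam * (v - u) ≤ V - U ∧
        ((StrictMonoOn φ (Icc a b) ∧ φ a = U ∧ φ b = V) ∨
         (StrictAntiOn φ (Icc a b) ∧ φ a = V ∧ φ b = U)) := by
    rcases hψor with ⟨hψm, hpa, hpb⟩ | ⟨hψa, hpa, hpb⟩ <;>
      rcases hGor' with hGm | hGa
    · have h1 : g i u < g i v := hGm humem hvmem huv
      refine ⟨g i u, g i v, h1, ?_, Or.inl ⟨hGm.comp hψm hψmaps, ?_, ?_⟩⟩
      · rwa [abs_of_pos (by linarith)] at hslope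
      · simp only [hφ, hpa]
      · simp only [hφ, hpb]
    · have h1 : g i v < g i u := hGa humem hvmem huv
      refine ⟨g i v, g i u, h1, ?_, Or.inr ⟨hGa.comp_strictMonoOn hψm hψmaps, ?_, ?_⟩⟩
      · rw [abs_of_neg (by linarith : g i v - g i u < 0)] at hslope; linarith
      · simp only [hφ, hpa]
      · simp only [hφ, hpb]
    · have h1 : g i u < g i v := hGm humem hvmem huv
      refine ⟨g i u, g i v, h1, ?_, Or.inr ⟨hGm.comp_strictAntiOn hψa hψmaps, ?_, ?_⟩⟩
      · rwa [abs_of_pos (by linarith)] at hslope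
      · simp only [hφ, hpa]
      · simp only [hφ, hpb]
    · have h1 : g i v < g i u := hGa humem hvmem huv
      refine ⟨g i v, g i u, h1, ?_, Or.inl ⟨hGa.comp hψa hψmaps, ?_, ?_⟩⟩
      · rw [abs_of_neg (by linarith : g i v - g i u < 0)] at hslope; linarith
      · simp only [hφ, hpa]
      · simp only [hφ, hpb]
  have hIVT : Icc U V ⊆ φ '' Icc a b := by
    rcases hφor with ⟨_, hpa, hpb⟩ | ⟨_, hpa, hpb⟩
    · have := intermediate_value_Icc hab.le hφc
      rwa [hpa, hpb] at this
    · have := intermediate_value_Icc' hab.le hφc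
      rwa [hpa, hpb] at this
  have hfract : ∀ x ∈ Ico a b, f^[s + 1] x = Int.fract (φ x) := by
    intro x hx
    have h1 : f^[s] x = ψ x := hψeq x hx
    have h2 : ψ x ∈ Ico (c i) (c (i + 1)) := by
      rw [← h1]; exact himg ⟨x, hx, rfl⟩
    rw [Function.iterate_succ_apply', h1, hfeq _ h2]
  -- pull back a value window
  have pull : ∀ w1 w2 : ℝ, U ≤ w1 → w1 < w2 → w2 ≤ V → ∃ a' b', a ≤ a' ∧ a' < b' ∧ b' ≤ b ∧
      ((StrictMonoOn φ (Icc a' b') ∧ φ a' = w1 ∧ φ b' = w2 ∧ φ '' Ico a' b' = Ico w1 w2) ∨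
       (StrictAntiOn φ (Icc a' b') ∧ φ a' = w2 ∧ φ b' = w1 ∧ φ '' Ico a' b' = Ioc w1 w2)) := by
    intro w1 w2 h1 h12 h2
    obtain ⟨t1, ht1, hφt1⟩ := hIVT ⟨h1, by linarith⟩
    obtain ⟨t2, ht2, hφt2⟩ := hIVT ⟨by linarith, h2⟩
    rcases hφor with ⟨hmono, _, _⟩ | ⟨hanti, _, _⟩
    · have htt : t1 < t2 := by
        rcases lt_trichotomy t1 t2 with h' | h' | h'
        · exact h'
        · exfalso; rw [h', hφt2] at hφt1; linarith
        · exfalso; have := hmono ht2 ht1 h'; rw [hφt1, hφt2] at this; linarith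
      have hsub : Icc t1 t2 ⊆ Icc a b := Icc_subset_Icc ht1.1 ht2.2
      refine ⟨t1, t2, ht1.1, htt, ht2.2, Or.inl ⟨hmono.mono hsub, hφt1, hφt2, ?_⟩⟩
      rw [image_Ico_of_mono htt.le (hmono.mono hsub) (hφc.mono hsub), hφt1, hφt2]
    · have htt : t2 < t1 := by
        rcases lt_trichotomy t2 t1 with h' | h' | h'
        · exact h'
        · exfalso; rw [h', hφt1] at hφt2; linarith
        · exfalso; have := hanti ht1 ht2 h'; rw [hφt1, hφt2] at this; linarith
      have hsub : Icc t2 t1 ⊆ Icc a b := Icc_subset_Icc ht2.1 ht1.2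
      refine ⟨t2, t1, ht2.1, htt, ht1.2, Or.inr ⟨hanti.mono hsub, hφt2, hφt1, ?_⟩⟩
      rw [image_Ico_of_anti htt.le (hanti.mono hsub) (hφc.mono hsub), hφt1, hφt2]
  have hchain' : ∀ a' b' : ℝ, a ≤ a' → b' ≤ b → ∀ k < s + 1,
      ∃ j < m, f^[k] '' Ico a' b' ⊆ Ico (c j) (c (j + 1)) := by
    intro a' b' ha' hb' k hk
    have hsub : Ico a' b' ⊆ Ico a b := Ico_subset_Ico ha' hb'
    rcases Nat.lt_succ_iff_lt_or_eq.1 hk with hk' | rfl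
    · obtain ⟨j, hj, hjsub⟩ := hchain k hk'
      exact ⟨j, hj, (Set.image_mono hsub).trans hjsub⟩
    · exact ⟨i, him, (Set.image_mono hsub).trans himg⟩
  set θ : ℝ := (lam - 2) * (v - u) / 4 with hθdef
  have hθpos : 0 < θ := by
    rw [hθdef]
    apply div_pos (mul_pos (by linarith) (by linarith)) (by norm_num)
  have hlenpos : 0 < lam * (v - u) := mul_pos hlam0 (sub_pos.2 huv)
  have hvu : 0 < v - u := sub_pos.2 huv
  -- state constructor
  have state_mk : ∀ (N : ℤ) (j : ℕ) (w1 w2 : ℝ), j < m → U ≤ w1 → w1 < w2 → w2 ≤ V →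
      (N : ℝ) ≤ w1 → w2 ≤ (N : ℝ) + 1 → c j ≤ w1 - N → w2 - N ≤ c (j + 1) →
      lam / 2 * (v - u) ≤ w2 - w1 →
      ∃ a' b' u' v', Inv f m c J (s + 1) a' b' u' v' ∧ (lam + 2) / 4 * (v - u) ≤ v' - u' := by
    intro N j w1 w2 hj h1 h12 h2 hN1 hN2 hcj1 hcj2 hw
    have hθlt : θ < w2 - w1 := by
      rw [hθdef]; linarith
    obtain ⟨a', b', haa, hab', hbb, hor'⟩ := pull w1 (w2 - θ) h1 (by linarith) (by linarith)
    have hbound : ∀ x ∈ Ico a' b', w1 ≤ φ x ∧ φ x ≤ w2 - θ := by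
      intro x hx
      rcases hor' with ⟨_, _, _, him'⟩ | ⟨_, _, _, him'⟩
      · have : φ x ∈ Ico w1 (w2 - θ) := him' ▸ Set.mem_image_of_mem φ hx
        exact ⟨this.1, this.2.le⟩
      · have : φ x ∈ Ioc w1 (w2 - θ) := him' ▸ Set.mem_image_of_mem φ hx
        exact ⟨this.1.le, this.2⟩
    have hfr : ∀ x ∈ Ico a' b', f^[s + 1] x = φ x - N := by
      intro x hx
      have hx' : x ∈ Ico a b := Ico_subset_Ico haa hbb hx
      have hmem := hbound x hx
      rw [hfract x hx', show φ x = (N : ℝ) + (φ x - N) by ring, Int.fract_intCast_add,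
        Int.fract_eq_self.2 ⟨by linarith [hmem.1], by linarith [hmem.2]⟩]
      ring
    refine ⟨a', b', w1 - N, w2 - θ - N, ⟨hab', by linarith, ?_, hchain' a' b' haa hbb, j, hj,
      ?_, ?_, fun x => φ x - N, hfr, ?_, ?_⟩, by rw [hθdef]; linarith⟩
    · exact (Ico_subset_Ico haa hbb).trans hJs
    · exact Icc_subset_Icc hcj1 (by linarith)
    · rintro y ⟨x, hx, rfl⟩
      rw [hfr x hx]
      have hb' := hbound x hx
      exact ⟨by linarith [hb'.1], by linarith [hb'.2]⟩
    · exact (hφc.mono (Icc_subset_Icc haa hbb)).sub continuousOn_const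
    · rcases hor' with ⟨hm', hpa, hpb, _⟩ | ⟨hm', hpa, hpb, _⟩
      · exact Or.inl ⟨fun x hx y hy hxy => sub_lt_sub_right (hm' hx hy hxy) _,
          show φ a' - (N : ℝ) = w1 - N by rw [hpa],
          show φ b' - (N : ℝ) = w2 - θ - N by rw [hpb]⟩
      · exact Or.inr ⟨fun x hx y hy hxy => sub_lt_sub_right (hm' hx hy hxy) _,
          show φ a' - (N : ℝ) = w2 - θ - N by rw [hpa],
          show φ b' - (N : ℝ) = w1 - N by rw [hpb]⟩
  -- done constructor: whole current interval, witnesses in Ioo U V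
  have hIoo : Ioo U V ⊆ φ '' Ico a b := by
    rcases hφor with ⟨hm', hpa, hpb⟩ | ⟨hm', hpa, hpb⟩
    · rw [image_Ico_of_mono hab.le hm' hφc, hpa, hpb]
      exact Ioo_subset_Ico_self
    · rw [image_Ico_of_anti hab.le hm' hφc, hpa, hpb]
      exact Ioo_subset_Ioc_self
  have done_whole : ∀ j : ℕ, j < m →
      (∀ x ∈ Ico (c j) (c (j + 1)), ∃ y, y ∈ Ioo U V ∧ Int.fract y = x) →
      Concl f m c J := by
    intro j hj hwit
    refine ⟨s + 1, Nat.succ_pos s, Ico a b, hJs, ⟨a, b, hab, rfl⟩,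
      hchain' a b le_rfl le_rfl, j, hj, ?_⟩
    intro x hx
    obtain ⟨y, hy, hyx⟩ := hwit x hx
    obtain ⟨t, ht, hφt⟩ := hIoo hy
    exact ⟨t, ht, by rw [hfract t ht, hφt, hyx]⟩
  -- integer decomposition
  set M : ℤ := ⌊U⌋ + 1 with hMdef
  have hUM : U < (M : ℝ) := by
    rw [hMdef]; push_cast; exact Int.lt_floor_add_one U
  have hMU : (M : ℝ) - 1 ≤ U := by
    rw [hMdef]; push_cast; linarith [Int.floor_le U]
  set p : ℝ := Int.fract U with hpdef
  have hp0 : 0 ≤ p := Int.fract_nonneg U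
  have hp1 : p < 1 := Int.fract_lt_one U
  have hUp : U = (M : ℝ) - 1 + p := by
    rw [hpdef, hMdef, ← Int.self_sub_floor]; push_cast; ring
  have hc1le : c 1 ≤ 1 := by
    rw [← hcm]; exact c_le hcmono 1 m hm le_rfl
  by_cases hA : (M : ℝ) + 1 ≤ V
  · -- a full unit interval fits: cover element 0
    left
    apply done_whole 0 hm
    intro x hx
    rw [hc0] at hx
    by_cases hx0 : x = 0
    · exact ⟨(M : ℝ), ⟨hUM, by linarith⟩, by rw [hx0]; exact Int.fract_intCast M⟩
    · have hx0' : 0 < x := lt_of_le_of_ne hx.1 (Ne.symm hx0)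
      have hx1 : x < 1 := lt_of_lt_of_le hx.2 hc1le
      refine ⟨(M : ℝ) + x, ⟨by linarith, by linarith⟩, ?_⟩
      rw [Int.fract_intCast_add, Int.fract_eq_self.2 ⟨hx.1, hx1⟩]
  by_cases hB1 : V ≤ (M : ℝ)
  · -- no interior integer: N = M - 1
    have hv1 : V - ((M : ℝ) - 1) ≤ 1 := by linarith
    obtain ⟨j0, hj0m, hj0a, hj0b⟩ := exists_index hc0 hcm hp0 hp1
    have hcj0_le1 : c (j0 + 1) ≤ 1 := by
      rw [← hcm]; exact c_le hcmono (j0 + 1) m hj0m le_rfl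
    by_cases hv : V - ((M : ℝ) - 1) ≤ c (j0 + 1)
    · right
      apply state_mk (M - 1) j0 U V hj0m le_rfl hUV le_rfl
      · push_cast; linarith
      · push_cast; linarith
      · push_cast; linarith
      · push_cast; linarith
      · linarith
    · push_neg at hv
      have hj01m : j0 + 1 < m := by
        rcases Nat.lt_or_ge (j0 + 1) m with h' | h'
        · exact h'
        · exfalso
          have he : j0 + 1 = m := by omega
          rw [he, hcm] at hv; linarith
      have hcj02_le1 : c (j0 + 1 + 1) ≤ 1 := by
        rw [← hcm]; exact c_le hcmono (j0 + 2) m hj01m le_rfl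
      by_cases hd : c (j0 + 1 + 1) ≤ V - ((M : ℝ) - 1)
      · left
        apply done_whole (j0 + 1) hj01m
        intro x hx
        have hx0 : 0 ≤ x := le_trans (by linarith [hj0b]) hx.1
        have hx1 : x < 1 := lt_of_lt_of_le hx.2 hcj02_le1
        refine ⟨(M : ℝ) - 1 + x, ⟨by linarith [hx.1, hj0b], ?_⟩, ?_⟩
        · have : x < c (j0 + 1 + 1) := hx.2
          linarith
        · rw [show (M : ℝ) - 1 + x = ((M - 1 : ℤ) : ℝ) + x by push_cast; ring,
            Int.fract_intCast_add, Int.fract_eq_self.2 ⟨hx0, hx1⟩]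
      · push_neg at hd
        right
        by_cases hpcs : c (j0 + 1) - p ≤ V - ((M : ℝ) - 1) - c (j0 + 1)
        · apply state_mk (M - 1) (j0 + 1) ((M : ℝ) - 1 + c (j0 + 1)) V hj01m
          · linarith [hj0b]
          · linarith
          · exact le_rfl
          · push_cast; linarith [hp0, hj0b]
          · push_cast; linarith
          · push_cast; linarith
          · push_cast; linarith
          · linarith
        · push_neg at hpcs
          apply state_mk (M - 1) j0 U ((M : ℝ) - 1 + c (j0 + 1)) hj0m le_rfl
          · linarith [hj0b]
          · linarith
          · push_cast; linarith
          · push_cast; linarith [hv, hv1]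
          · push_cast; linarith
          · push_cast; linarith
          · linarith
  · -- exactly one interior integer M
    push_neg at hB1
    have hVM1 : V < (M : ℝ) + 1 := lt_of_not_ge hA
    set q : ℝ := V - (M : ℝ) with hqdef
    have hq0 : 0 < q := by rw [hqdef]; linarith
    have hq1 : q < 1 := by rw [hqdef]; linarith
    by_cases hq : c 1 ≤ q
    · -- cover element 0
      left
      apply done_whole 0 hm
      intro x hx
      rw [hc0] at hx
      by_cases hx0 : x = 0
      · exact ⟨(M : ℝ), ⟨hUM, hB1⟩, by rw [hx0]; exact Int.fract_intCast M⟩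
      · have hx0' : 0 < x := lt_of_le_of_ne hx.1 (Ne.symm hx0)
        have hxq : x < q := lt_of_lt_of_le hx.2 hq
        refine ⟨(M : ℝ) + x, ⟨by linarith, by rw [hqdef] at hxq; linarith⟩, ?_⟩
        rw [Int.fract_intCast_add, Int.fract_eq_self.2 ⟨hx.1, by linarith⟩]
    · push_neg at hq
      obtain ⟨j0, hj0m, hj0a, hj0b⟩ := exists_index hc0 hcm hp0 hp1
      have hcj0_le1 : c (j0 + 1) ≤ 1 := by
        rw [← hcm]; exact c_le hcmono (j0 + 1) m hj0m le_rfl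
      by_cases hj01 : c (j0 + 1) < 1
      · -- cover element j0+1
        left
        have hj01m : j0 + 1 < m := by
          rcases Nat.lt_or_ge (j0 + 1) m with h' | h'
          · exact h'
          · exfalso
            have he : j0 + 1 = m := by omega
            rw [he, hcm] at hj01; linarith
        have hcj02_le1 : c (j0 + 1 + 1) ≤ 1 := by
          rw [← hcm]; exact c_le hcmono (j0 + 2) m hj01m le_rfl
        apply done_whole (j0 + 1) hj01m
        intro x hx
        have hx0 : 0 ≤ x := le_trans (by linarith [hj0b]) hx.1
        have hx1 : x < 1 := lt_of_lt_of_le hx.2 hcj02_le1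
        refine ⟨(M : ℝ) - 1 + x, ⟨by linarith [hx.1, hj0b], by linarith⟩, ?_⟩
        rw [show (M : ℝ) - 1 + x = ((M - 1 : ℤ) : ℝ) + x by push_cast; ring,
          Int.fract_intCast_add, Int.fract_eq_self.2 ⟨hx0, hx1⟩]
      · push_neg at hj01
        have hcj0_eq1 : c (j0 + 1) = 1 := le_antisymm hcj0_le1 hj01
        right
        by_cases hLR : (M : ℝ) - U ≤ V - (M : ℝ)
        · apply state_mk M 0 (M : ℝ) V hm hUM.le hB1 le_rfl le_rfl hVM1.le
          · rw [hc0]; simp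
          · rw [hqdef] at hq; linarith
          · linarith
        · push_neg at hLR
          apply state_mk (M - 1) j0 U (M : ℝ) hj0m le_rfl hUM hB1.le
          · push_cast; linarith
          · push_cast; linarith
          · push_cast; linarith
          · push_cast; linarith
          · linarith

end Overflow

open Overflow in


/-- For a piecewise `C²` expanding circle map (circle modeled as
`[0,1)` with `f` expressed piecewise as `Int.fract ∘ g i` for `C²` extensions `g i`
with `|g i '| ≥ λ > 2`), every nondegenerate interval `J` contains a subinterval `Jₛ`
on which some iterate `f^[s]` is smooth (each intermediate image lies in a single
partition element) and whose image under `f^[s]` contains a full partition element. -/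
theorem interval_overflows_partition_element
    (f : ℝ → ℝ) (hf : Set.MapsTo f (Set.Ico (0 : ℝ) 1) (Set.Ico (0 : ℝ) 1))
    (m : ℕ) (hm : 0 < m) (c : ℕ → ℝ)
    (hc0 : c 0 = 0) (hcm : c m = 1) (hcmono : ∀ i < m, c i < c (i + 1))
    (lam : ℝ) (hlam : 2 < lam)
    (g : ℕ → ℝ → ℝ)
    (hpiece : ∀ i < m,
      ContDiffOn ℝ 2 (g i) (Set.Icc (c i) (c (i + 1))) ∧
      (∀ x ∈ Set.Ico (c i) (c (i + 1)), f x = Int.fract (g i x)) ∧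
      (∀ x ∈ Set.Icc (c i) (c (i + 1)), lam ≤ |derivWithin (g i) (Set.Icc (c i) (c (i + 1))) x|))
    (J : Set ℝ) (hJsub : J ⊆ Set.Ico (0 : ℝ) 1)
    (hJ : ∃ a b : ℝ, a < b ∧ J = Set.Ico a b) :
    ∃ s : ℕ, 0 < s ∧ ∃ Js : Set ℝ, Js ⊆ J ∧ (∃ a b : ℝ, a < b ∧ Js = Set.Ico a b) ∧
      (∀ k < s, ∃ i < m, f^[k] '' Js ⊆ Set.Ico (c i) (c (i + 1))) ∧
      (∃ i < m, Set.Ico (c i) (c (i + 1)) ⊆ f^[s] '' Js) := by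
    classical
  obtain ⟨aJ, bJ, habJ, hJeq⟩ := hJ
  have haJ : aJ ∈ Set.Ico (0:ℝ) 1 := hJsub (by rw [hJeq]; exact ⟨le_rfl, habJ⟩)
  obtain ⟨j, hj, hj1, hj2⟩ := exists_index hc0 hcm haJ.1 haJ.2
  set b0 := min bJ (c (j + 1)) with hb0
  have hab0 : aJ < b0 := lt_min habJ hj2
  have hInv0 : Inv f m c J 0 aJ b0 aJ b0 := by
    refine ⟨hab0, hab0, ?_, ?_, j, hj, Set.Icc_subset_Icc hj1 (min_le_right _ _), ?_,
      id, fun x _ => Function.iterate_zero_apply f x, continuousOn_id,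
      Or.inl ⟨fun x _ y _ h => h, rfl, rfl⟩⟩
    · rw [hJeq]; exact Set.Ico_subset_Ico_right (min_le_left _ _)
    · intro k hk; exact absurd hk (Nat.not_lt_zero k)
    · intro y hy
      simp only [Function.iterate_zero, Set.image_id] at hy
      exact ⟨le_trans hj1 hy.1, lt_of_lt_of_le hy.2 (min_le_right _ _)⟩
  have hk1 : (1:ℝ) < (lam + 2) / 4 := by linarith
  have main : ∀ n : ℕ, ∀ s : ℕ, ∀ a b u v : ℝ, Inv f m c J s a b u v →
      1 < ((lam + 2) / 4) ^ n * (v - u) → Concl f m c J := by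
    intro n
    induction n with
    | zero =>
      intro s a b u v hInv hgt
      exfalso
      obtain ⟨_, huv, _, _, i, him, hIcc, _⟩ := hInv
      have h0 : 0 ≤ c i := by
        rw [← hc0]; exact c_le hcmono 0 i (Nat.zero_le i) (le_of_lt him)
      have h1 : c (i + 1) ≤ 1 := by rw [← hcm]; exact c_le hcmono (i + 1) m him le_rfl
      have hu := (hIcc (Set.left_mem_Icc.2 huv.le)).1
      have hv := (hIcc (Set.right_mem_Icc.2 huv.le)).2
      rw [pow_zero, one_mul] at hgt
      linarith
    | succ n ih =>
      intro s a b u v hInv hgt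
      rcases step f m hm c hc0 hcm hcmono lam hlam g hpiece J hInv with
        hcon | ⟨a', b', u', v', hInv', hgrow⟩
      · exact hcon
      · apply ih (s + 1) a' b' u' v' hInv'
        have hpow : (0:ℝ) < ((lam + 2) / 4) ^ n := pow_pos (by linarith) n
        calc (1:ℝ) < ((lam + 2) / 4) ^ (n + 1) * (v - u) := hgt
          _ = ((lam + 2) / 4) ^ n * ((lam + 2) / 4 * (v - u)) := by ring
          _ ≤ ((lam + 2) / 4) ^ n * (v' - u') := mul_le_mul_of_nonneg_left hgrow hpow.le
  obtain ⟨n, hn⟩ := pow_unbounded_of_one_lt (1 / (b0 - aJ)) hk1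
  have hconc : Concl f m c J := by
    apply main n 0 aJ b0 aJ b0 hInv0
    have hl : 0 < b0 - aJ := sub_pos.2 hab0
    exact (div_lt_iff₀ hl).1 hn
  exact hconc
end

section
/- Let $\varphi : M \to (0,\infty)$ be a function on a compact connected metric space $M$ with $\int \varphi\,dm = 1$ for a finite Borel measure $m$ with full support, and suppose $|\varphi(x)/\varphi(y) - 1| \le L\,d(x,y)$ whenever $d(x,y) < \varepsilon$. Then there exists $\kappa > 0$, depending only on $L$, $\varepsilon$, $m$, and the metric structure of $M$ (not on $\varphi$), such that $\varphi \ge \kappa$ everywhere on $M$. -/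
open MeasureTheory

/-- On a compact connected metric space with a finite fully supported
Borel measure, probability densities in the regularity class
`|φ x / φ y - 1| ≤ L d(x,y)` for `d(x,y) < ε` (with `L ε < 1`) admit a uniform
positive lower bound `κ` depending only on `L`, `ε`, `m`, and the space, not on
`φ`. -/
theorem uniform_density_lower_bound
    {M : Type*} [MetricSpace M] [CompactSpace M] [ConnectedSpace M] [Nonempty M]
    [MeasurableSpace M] [BorelSpace M]
    (m : Measure M) [IsFiniteMeasure m] (hm : m ≠ 0) [m.IsOpenPosMeasure]
    (L ε : ℝ) (hL : 0 < L) (hε : 0 < ε) (hLε : L * ε < 1) :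
    ∃ κ : ℝ, 0 < κ ∧
      ∀ φ : M → ℝ,
        (∀ x, 0 < φ x) →
        Integrable φ m →
        (∫ x, φ x ∂m) = 1 →
        (∀ x y, dist x y < ε → |φ x / φ y - 1| ≤ L * dist x y) →
        ∀ x, κ ≤ φ x := by
  classical
  obtain ⟨x₀⟩ := ‹Nonempty M›
  set c : ℝ := 1 - L * ε with hc_def
  have hc : 0 < c := by simp only [hc_def]; linarith
  -- iterated ε-neighborhoods of x₀
  let A : ℕ → Set M := fun n => Nat.rec {x₀} (fun _ s => ⋃ z ∈ s, Metric.ball z ε) n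
  have hA0 : A 0 = {x₀} := rfl
  have hAsucc : ∀ n, A (n + 1) = ⋃ z ∈ A n, Metric.ball z ε := fun n => rfl
  have hmono : Monotone A := by
    apply monotone_nat_of_le_succ
    intro n y hy
    rw [hAsucc]
    exact Set.mem_biUnion hy (Metric.mem_ball_self hε)
  have hopen : ∀ n, IsOpen (A (n + 1)) := fun n =>
    isOpen_biUnion fun z _ => Metric.isOpen_ball
  have hUopen : IsOpen (⋃ n, A (n + 1)) := isOpen_iUnion hopen
  have hUclosed : IsClosed (⋃ n, A (n + 1)) := by
    apply isClosed_of_closure_subset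
    intro y hy
    rcases Metric.mem_closure_iff.mp hy ε hε with ⟨z, hzU, hdz⟩
    obtain ⟨n, hzn⟩ := Set.mem_iUnion.mp hzU
    refine Set.mem_iUnion.mpr ⟨n + 1, ?_⟩
    rw [hAsucc (n+1)]
    exact Set.mem_biUnion hzn (by rw [Metric.mem_ball]; exact hdz)
  have hUuniv : (⋃ n, A (n + 1)) = Set.univ := by
    apply IsClopen.eq_univ ⟨hUclosed, hUopen⟩
    exact ⟨x₀, Set.mem_iUnion.mpr ⟨0, hmono (Nat.zero_le 1) rfl⟩⟩
  -- finite subcover: everything reached in N+1 steps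
  obtain ⟨t, ht⟩ := isCompact_univ.elim_finite_subcover (fun n => A (n + 1)) hopen
    (by rw [← hUuniv])
  set N : ℕ := t.sup id with hN_def
  have hcov : ∀ x : M, x ∈ A (N + 1) := by
    intro x
    obtain ⟨i, hi, hx⟩ := Set.mem_iUnion₂.mp (ht (Set.mem_univ x))
    exact hmono (Nat.succ_le_succ (Finset.le_sup (f := id) hi)) hx
  have hb : 0 < (m Set.univ).toReal := by
    apply ENNReal.toReal_pos
    · simpa [Measure.measure_univ_eq_zero] using hm
    · exact measure_ne_top m _
  set b : ℝ := (m Set.univ).toReal with hb_def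
  refine ⟨c ^ (N + 1) * c ^ (N + 1) * (1 / (2 * b)), by positivity, ?_⟩
  intro φ hφ hint hnorm hreg
  -- one-step bound
  have hstep : ∀ y z : M, dist y z < ε → c * φ z ≤ φ y := by
    intro y z hd
    have h1 := hreg y z hd
    have h2 : -(L * dist y z) ≤ φ y / φ z - 1 := neg_le_of_abs_le h1 |>.trans_eq rfl
    have h3 : L * dist y z ≤ L * ε := by nlinarith [dist_nonneg (x := y) (y := z)]
    have h4 : c ≤ φ y / φ z := by simp only [hc_def]; linarith [neg_le_of_abs_le h1]
    calc c * φ z ≤ (φ y / φ z) * φ z := mul_le_mul_of_nonneg_right h4 (hφ z).le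
      _ = φ y := div_mul_cancel₀ _ (hφ z).ne'
  -- chain bound
  have key : ∀ n, ∀ y ∈ A n, c ^ n * φ x₀ ≤ φ y ∧ c ^ n * φ y ≤ φ x₀ := by
    intro n
    induction n with
    | zero =>
      intro y hy
      rw [hA0, Set.mem_singleton_iff] at hy
      subst hy; simp
    | succ n ih =>
      intro y hy
      rw [hAsucc] at hy
      obtain ⟨z, hz, hyz⟩ := Set.mem_iUnion₂.mp hy
      have hdyz : dist y z < ε := Metric.mem_ball.mp hyz
      obtain ⟨h1, h2⟩ := ih z hz
      constructor
      · calc c ^ (n + 1) * φ x₀ = c * (c ^ n * φ x₀) := by ring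
          _ ≤ c * φ z := mul_le_mul_of_nonneg_left h1 hc.le
          _ ≤ φ y := hstep y z hdyz
      · have hz' : c * φ y ≤ φ z := hstep z y (by rw [dist_comm]; exact hdyz)
        calc c ^ (n + 1) * φ y = c ^ n * (c * φ y) := by ring
          _ ≤ c ^ n * φ z := mul_le_mul_of_nonneg_left hz' (pow_nonneg hc.le n)
          _ ≤ φ x₀ := h2
  -- somewhere φ is at least 1/(2b)
  have hbig : ∃ y : M, 1 / (2 * b) ≤ φ y := by
    by_contra h
    push_neg at h
    have hle : ∀ y : M, φ y ≤ 1 / (2 * b) := fun y => (h y).le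
    have := integral_mono hint (integrable_const (1 / (2 * b))) hle
    rw [hnorm, integral_const] at this
    have : (1 : ℝ) ≤ b * (1 / (2 * b)) := by simpa [smul_eq_mul, hb_def, measureReal_def] using this
    rw [mul_one_div, mul_comm] at this
    have h2b : (1:ℝ) * (b * 2) ≤ b := (le_div_iff₀ (by positivity)).mp this
    linarith
  obtain ⟨y, hy⟩ := hbig
  intro x
  have hx := (key (N + 1) x (hcov x)).1
  have hy2 := (key (N + 1) y (hcov y)).2
  have hp : 0 < c ^ (N + 1) := pow_pos hc _
  nlinarith [hφ x₀, hφ x, hφ y, mul_le_mul_of_nonneg_left hy2 hp.le]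
end
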